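/- Let p, n ≥ 1 be integers and consider the (p+n)×(p+n) real block matrix B = [[n·I_p, J_{p,n}],[J_{n,p}, p·I_n]]. Let G = [[(1/n)·I_p, 0],[−(1/(np))·J_{n,p}, (1/p)·I_n]]. Then G is a generalized inverse of B, i.e. B·G·B = B. -/
import Mathlib


open Matrix

/-- `G` is a generalized inverse of the block matrix
`B = [[n·I_p, J_{p,n}], [J_{n,p}, p·I_n]]`, i.e. `B * G * B = B`. -/
theorem g_inverse_of_block_matrix (p n : ℕ) (hp : 1 ≤ p) (hn : 1 ≤ n)
    (B G : Matrix (Fin p ⊕ Fin n) (Fin p ⊕ Fin n) ℝ)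
    (hB : B = Matrix.fromBlocks
      ((n : ℝ) • (1 : Matrix (Fin p) (Fin p) ℝ))
      (Matrix.of fun _ _ => (1 : ℝ))
      (Matrix.of fun _ _ => (1 : ℝ))
      ((p : ℝ) • (1 : Matrix (Fin n) (Fin n) ℝ)))
    (hG : G = Matrix.fromBlocks
      (((n : ℝ))⁻¹ • (1 : Matrix (Fin p) (Fin p) ℝ))
      (0 : Matrix (Fin p) (Fin n) ℝ)
      (Matrix.of fun _ _ => (-(1 / ((n : ℝ) * p))))
      (((p : ℝ))⁻¹ • (1 : Matrix (Fin n) (Fin n) ℝ))) :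
    B * G * B = B := by
  have hn0 : (n:ℝ) ≠ 0 := by positivity
  have hp0 : (p:ℝ) ≠ 0 := by positivity
  subst hB hG
  ext (i|i) (j|j) <;>
    simp [mul_apply, Fintype.sum_sum_type, Finset.sum_ite_eq, Finset.mul_sum,
      Finset.sum_mul, one_apply, mul_comm, Finset.sum_add_distrib] <;>
    field_simp <;> (try split_ifs) <;> ring
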